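/- Let d_n be the number of descents of the Peano word X_n. For all k ≥ 0, d_{2k+1} = (8/5)(16^k - 1), i.e. 5·d_{2k+1} = 8(16^k - 1). -/

import Mathlib

/-- φ1: reverse the word and apply 1↦4, 2↦1, 3↦2, 4↦3. -/
def phi1 (A : List ℕ) : List ℕ := A.reverse.map (fun x => if x = 1 then 4 else x - 1)

/-- φ2: reverse the word and apply 1↦2, 2↦3, 3↦4, 4↦1. -/
def phi2 (A : List ℕ) : List ℕ := A.reverse.map (fun x => if x = 4 then 1 else x + 1)

/-- The Peano words: `peano 1 = 123`, `peano (n+1) = φ1(Xₙ) 1 Xₙ 2 Xₙ 3 φ2(Xₙ)`. -/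
def peano : ℕ → List ℕ
  | 0 => []
  | 1 => [1, 2, 3]
  | n + 2 =>
      phi1 (peano (n + 1)) ++ [1] ++ peano (n + 1) ++ [2] ++ peano (n + 1)
        ++ [3] ++ phi2 (peano (n + 1))

/-- Number of rises of a word. -/
def rises (w : List ℕ) : ℕ := ((w.zip w.tail).filter (fun p => p.1 < p.2)).length

/-- Number of descents of a word. -/
def descents (w : List ℕ) : ℕ := ((w.zip w.tail).filter (fun p => p.2 < p.1)).length


namespace PA

def f1 (x : ℕ) : ℕ := if x = 1 then 4 else x - 1
def f2 (x : ℕ) : ℕ := if x = 4 then 1 else x + 1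

def pairs (w : List ℕ) : List (ℕ × ℕ) := w.zip w.tail

@[simp] lemma pairs_nil : pairs [] = [] := rfl
@[simp] lemma pairs_single (a : ℕ) : pairs [a] = [] := rfl
@[simp] lemma pairs_cons_cons (a b : ℕ) (t : List ℕ) :
    pairs (a :: b :: t) = (a, b) :: pairs (b :: t) := rfl

def glue (u v : List ℕ) : List (ℕ × ℕ) := u.getLast?.toList.zip v.head?.toList

lemma pairs_append (u v : List ℕ) :
    pairs (u ++ v) = pairs u ++ glue u v ++ pairs v := by
  induction u with
  | nil => simp [glue]
  | cons a u ih =>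
    cases u with
    | nil =>
      cases v with
      | nil => rfl
      | cons b t => simp [glue, pairs, List.zip]
    | cons c u' =>
      have h1 : (a :: c :: u') ++ v = a :: ((c :: u') ++ v) := rfl
      have h2 : pairs (a :: ((c :: u') ++ v)) = (a, c) :: pairs ((c :: u') ++ v) := rfl
      rw [h1, h2, ih]
      have : glue (a :: c :: u') v = glue (c :: u') v := by
        simp [glue, List.getLast?]
      rw [this]
      simp

lemma pairs_revmap (f : ℕ → ℕ) (w : List ℕ) :
    pairs (w.reverse.map f) = ((pairs w).map (fun p => (f p.2, f p.1))).reverse := by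
  induction w with
  | nil => simp
  | cons x t ih =>
    have h1 : (x :: t).reverse.map f = t.reverse.map f ++ [f x] := by simp
    rw [h1, pairs_append]
    have hg : glue (t.reverse.map f) [f x]
        = (t.head?.map f).toList.zip [f x] := by
      simp [glue, List.getLast?_map]
    cases t with
    | nil => simp [glue]
    | cons y t' =>
      rw [hg]
      simp only [List.head?_cons, Option.map_some]
      rw [ih]
      simp

def InR (x : ℕ) : Prop := x = 1 ∨ x = 2 ∨ x = 3 ∨ x = 4

lemma InR_f1 {x : ℕ} (h : InR x) : InR (f1 x) := by
  rcases h with rfl | rfl | rfl | rfl <;> simp [f1, InR]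

lemma InR_f2 {x : ℕ} (h : InR x) : InR (f2 x) := by
  rcases h with rfl | rfl | rfl | rfl <;> simp [f2, InR]

lemma range_peano : ∀ n, ∀ x ∈ peano n, InR x := by
  intro n
  induction n with
  | zero => simp [peano]
  | succ m ih =>
    cases m with
    | zero => intro x hx; simp [peano] at hx; rcases hx with rfl|rfl|rfl <;> simp [InR]
    | succ m' =>
      intro x hx
      have : peano (m' + 2) = phi1 (peano (m' + 1)) ++ [1] ++ peano (m' + 1) ++ [2]
          ++ peano (m' + 1) ++ [3] ++ phi2 (peano (m' + 1)) := rfl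
      rw [this] at hx
      simp only [List.mem_append, List.mem_singleton] at hx
      rcases hx with ((((((hy|rfl)|h)|rfl)|h)|rfl)|hy)
      · rw [phi1, List.mem_map] at hy
        obtain ⟨y, hy, rfl⟩ := hy
        exact InR_f1 (ih y (List.mem_reverse.mp hy))
      · simp [InR]
      · exact ih x h
      · simp [InR]
      · exact ih x h
      · simp [InR]
      · rw [phi2, List.mem_map] at hy
        obtain ⟨y, hy, rfl⟩ := hy
        exact InR_f2 (ih y (List.mem_reverse.mp hy))

lemma pairs_mem {w : List ℕ} (hw : ∀ x ∈ w, InR x) {p : ℕ × ℕ} (h : p ∈ pairs w) :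
    InR p.1 ∧ InR p.2 := by
  obtain ⟨a, b⟩ := p
  have := List.of_mem_zip h
  exact ⟨hw a this.1, hw b (List.mem_of_mem_tail this.2)⟩

lemma count_pairs_phi1 (w : List ℕ) (hw : ∀ x ∈ w, InR x) (a b : ℕ)
    (ha : InR a) (hb : InR b) :
    (pairs (phi1 w)).count (a, b) = (pairs w).count (f2 b, f2 a) := by
  have h1 : phi1 w = w.reverse.map f1 := rfl
  rw [h1, pairs_revmap, List.count_reverse]
  rw [List.count, List.count, List.countP_map]
  apply List.countP_congr
  intro p hp
  obtain ⟨h1, h2⟩ := pairs_mem hw hp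
  obtain ⟨x, y⟩ := p
  simp only [Function.comp]
  rcases h1 with rfl|rfl|rfl|rfl <;> rcases h2 with rfl|rfl|rfl|rfl <;>
    rcases ha with rfl|rfl|rfl|rfl <;> rcases hb with rfl|rfl|rfl|rfl <;> decide

lemma count_pairs_phi2 (w : List ℕ) (hw : ∀ x ∈ w, InR x) (a b : ℕ)
    (ha : InR a) (hb : InR b) :
    (pairs (phi2 w)).count (a, b) = (pairs w).count (f1 b, f1 a) := by
  have h1 : phi2 w = w.reverse.map f2 := rfl
  rw [h1, pairs_revmap, List.count_reverse]
  rw [List.count, List.count, List.countP_map]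
  apply List.countP_congr
  intro p hp
  obtain ⟨h1, h2⟩ := pairs_mem hw hp
  obtain ⟨x, y⟩ := p
  simp only [Function.comp]
  rcases h1 with rfl|rfl|rfl|rfl <;> rcases h2 with rfl|rfl|rfl|rfl <;>
    rcases ha with rfl|rfl|rfl|rfl <;> rcases hb with rfl|rfl|rfl|rfl <;> decide

lemma head?_phi1 (w : List ℕ) : (phi1 w).head? = w.getLast?.map f1 := by
  show (w.reverse.map f1).head? = _
  rw [List.head?_map, List.head?_reverse]

lemma getLast?_phi1 (w : List ℕ) : (phi1 w).getLast? = w.head?.map f1 := by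
  show (w.reverse.map f1).getLast? = _
  rw [List.getLast?_map, List.getLast?_reverse]

lemma head?_phi2 (w : List ℕ) : (phi2 w).head? = w.getLast?.map f2 := by
  show (w.reverse.map f2).head? = _
  rw [List.head?_map, List.head?_reverse]

lemma getLast?_phi2 (w : List ℕ) : (phi2 w).getLast? = w.head?.map f2 := by
  show (w.reverse.map f2).getLast? = _
  rw [List.getLast?_map, List.getLast?_reverse]

lemma peano_step (n : ℕ) : peano (n + 2) =
    phi1 (peano (n + 1)) ++ [1] ++ peano (n + 1) ++ [2] ++ peano (n + 1)
      ++ [3] ++ phi2 (peano (n + 1)) := rfl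

lemma hd_lst : ∀ k : ℕ,
    ((peano (2 * k + 1)).head? = some 1 ∧ (peano (2 * k + 1)).getLast? = some 3) ∧
    ((peano (2 * k + 2)).head? = some 2 ∧ (peano (2 * k + 2)).getLast? = some 2) := by
  intro k
  induction k with
  | zero =>
    refine ⟨⟨rfl, rfl⟩, ?_, ?_⟩ <;> decide
  | succ m ih =>
    obtain ⟨⟨h1, h2⟩, h3, h4⟩ := ih
    have e1 : 2 * (m + 1) + 1 = (2 * m + 1) + 2 := by ring
    have e3 : (2 * m + 1) + 1 = 2 * m + 2 := rfl
    have odd1 : (peano (2 * (m + 1) + 1)).head? = some 1 ∧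
        (peano (2 * (m + 1) + 1)).getLast? = some 3 := by
      rw [e1, peano_step, e3]
      constructor
      · rw [List.head?_append, List.head?_append, List.head?_append, List.head?_append,
          List.head?_append, List.head?_append, head?_phi1, h4]
        rfl
      · rw [List.getLast?_append, List.getLast?_append, List.getLast?_append,
          List.getLast?_append, List.getLast?_append, List.getLast?_append,
          getLast?_phi2, h3]
        rfl
    refine ⟨odd1, ?_, ?_⟩
    · rw [peano_step]
      rw [List.head?_append, List.head?_append, List.head?_append, List.head?_append,
        List.head?_append, List.head?_append, head?_phi1, odd1.2]
      rfl
    · rw [peano_step]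
      rw [List.getLast?_append, List.getLast?_append, List.getLast?_append,
        List.getLast?_append, List.getLast?_append, List.getLast?_append,
        getLast?_phi2, odd1.1]
      rfl

lemma some_or' {α : Type} (a : α) (x : Option α) : (Option.some a).or x = some a := rfl

lemma cnt_step (w : List ℕ) (hw : ∀ x ∈ w, InR x) (h l : ℕ)
    (hh : w.head? = some h) (hl : w.getLast? = some l) (a b : ℕ)
    (ha : InR a) (hb : InR b) :
    (pairs (phi1 w ++ [1] ++ w ++ [2] ++ w ++ [3] ++ phi2 w)).count (a, b)
    = (pairs w).count (f2 b, f2 a) + 2 * (pairs w).count (a, b)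
      + (pairs w).count (f1 b, f1 a)
      + ([(f1 h, 1), (1, h), (l, 2), (2, h), (l, 3), (3, f2 l)] : List (ℕ × ℕ)).count (a, b) := by
  simp only [pairs_append, glue, List.getLast?_append, List.head?_append,
    head?_phi1, getLast?_phi1, head?_phi2, getLast?_phi2, hh, hl]
  simp only [List.count_append, count_pairs_phi1 w hw a b ha hb,
    count_pairs_phi2 w hw a b ha hb]
  simp only [List.getLast?_singleton, List.head?_cons, Option.map_some,
    some_or', Option.toList_some, List.zip_cons_cons, List.zip_nil_right,
    List.zip_nil_left, pairs_single, pairs_nil, List.count_nil, List.count_cons]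
  omega
lemma stepO11 (P Q c1 c2 c3 d : ℕ)
    (h1 : 15 * c1 + 8 = 3 * P + 5 * Q) (h2 : 15 * c2 + 3 = 3 * P)
    (h3 : 15 * c3 + 5 * Q = 3 * P + 2) (r : d = c1 + 2 * c2 + c3 + 1) :
    15 * d = 12 * P + 3 := by omega

lemma stepE11 (P Q c1 c2 c3 d : ℕ)
    (h1 : 15 * c1 + 22 = 12 * P + 10 * Q) (h2 : 15 * c2 = 12 * P + 3)
    (h3 : 15 * c3 + 10 * Q + 2 = 12 * P) (r : d = c1 + 2 * c2 + c3 + 1) :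
    15 * d + 3 = 3 * (P * 16) := by omega

lemma stepO12 (P Q c1 c2 c3 d : ℕ)
    (h1 : 15 * c1 + 11 = 6 * P + 5 * Q) (h2 : 15 * c2 = 6 * P + 5 * Q + 4)
    (h3 : 15 * c3 + 5 * Q + 1 = 6 * P) (r : d = c1 + 2 * c2 + c3) :
    15 * d + 4 = 24 * P + 10 * Q := by omega

lemma stepE12 (P Q c1 c2 c3 d : ℕ)
    (h1 : 15 * c1 + 4 = 24 * P + 10 * Q) (h2 : 15 * c2 + 4 = 24 * P + 10 * Q)
    (h3 : 15 * c3 + 10 * Q = 24 * P + 1) (r : d = c1 + 2 * c2 + c3 + 1) :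
    15 * d = 6 * (P * 16) + 5 * (Q * 4) + 4 := by omega

lemma stepO13 (P Q c1 c2 c3 d : ℕ)
    (h1 : c1 = 0) (h2 : c2 = 0)
    (h3 : c3 = 0) (r : d = c1 + 2 * c2 + c3) :
    d = 0 := by omega

lemma stepE13 (P Q c1 c2 c3 d : ℕ)
    (h1 : c1 = 0) (h2 : c2 = 0)
    (h3 : c3 = 0) (r : d = c1 + 2 * c2 + c3) :
    d = 0 := by omega

lemma stepO14 (P Q c1 c2 c3 d : ℕ)
    (h1 : 15 * c1 = 6 * P + 5 * Q + 4) (h2 : 15 * c2 + 5 * Q + 1 = 6 * P)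
    (h3 : 15 * c3 + 5 * Q + 1 = 6 * P) (r : d = c1 + 2 * c2 + c3) :
    15 * d + 10 * Q = 24 * P + 1 := by omega

lemma stepE14 (P Q c1 c2 c3 d : ℕ)
    (h1 : 15 * c1 + 4 = 24 * P + 10 * Q) (h2 : 15 * c2 + 10 * Q = 24 * P + 1)
    (h3 : 15 * c3 + 10 * Q = 24 * P + 1) (r : d = c1 + 2 * c2 + c3) :
    15 * d + 5 * (Q * 4) + 1 = 6 * (P * 16) := by omega

lemma stepO21 (P Q c1 c2 c3 d : ℕ)
    (h1 : 15 * c1 = 6 * P + 5 * Q + 4) (h2 : 15 * c2 + 11 = 6 * P + 5 * Q)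
    (h3 : 15 * c3 + 5 * Q + 1 = 6 * P) (r : d = c1 + 2 * c2 + c3 + 1) :
    15 * d + 4 = 24 * P + 10 * Q := by omega

lemma stepE21 (P Q c1 c2 c3 d : ℕ)
    (h1 : 15 * c1 + 4 = 24 * P + 10 * Q) (h2 : 15 * c2 + 4 = 24 * P + 10 * Q)
    (h3 : 15 * c3 + 10 * Q = 24 * P + 1) (r : d = c1 + 2 * c2 + c3) :
    15 * d + 11 = 6 * (P * 16) + 5 * (Q * 4) := by omega

lemma stepO22 (P Q c1 c2 c3 d : ℕ)
    (h1 : 15 * c1 + 3 = 3 * P) (h2 : 15 * c2 + 8 = 3 * P + 5 * Q)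
    (h3 : 15 * c3 + 3 = 3 * P) (r : d = c1 + 2 * c2 + c3) :
    15 * d + 22 = 12 * P + 10 * Q := by omega

lemma stepE22 (P Q c1 c2 c3 d : ℕ)
    (h1 : 15 * c1 = 12 * P + 3) (h2 : 15 * c2 + 22 = 12 * P + 10 * Q)
    (h3 : 15 * c3 = 12 * P + 3) (r : d = c1 + 2 * c2 + c3 + 2) :
    15 * d + 8 = 3 * (P * 16) + 5 * (Q * 4) := by omega

lemma stepO23 (P Q c1 c2 c3 d : ℕ)
    (h1 : 15 * c1 + 5 * Q + 1 = 6 * P) (h2 : 15 * c2 = 6 * P + 5 * Q + 4)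
    (h3 : 15 * c3 + 11 = 6 * P + 5 * Q) (r : d = c1 + 2 * c2 + c3) :
    15 * d + 4 = 24 * P + 10 * Q := by omega

lemma stepE23 (P Q c1 c2 c3 d : ℕ)
    (h1 : 15 * c1 + 10 * Q = 24 * P + 1) (h2 : 15 * c2 + 4 = 24 * P + 10 * Q)
    (h3 : 15 * c3 + 4 = 24 * P + 10 * Q) (r : d = c1 + 2 * c2 + c3 + 1) :
    15 * d = 6 * (P * 16) + 5 * (Q * 4) + 4 := by omega

lemma stepO24 (P Q c1 c2 c3 d : ℕ)
    (h1 : c1 = 0) (h2 : c2 = 0)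
    (h3 : c3 = 0) (r : d = c1 + 2 * c2 + c3) :
    d = 0 := by omega

lemma stepE24 (P Q c1 c2 c3 d : ℕ)
    (h1 : c1 = 0) (h2 : c2 = 0)
    (h3 : c3 = 0) (r : d = c1 + 2 * c2 + c3) :
    d = 0 := by omega

lemma stepO31 (P Q c1 c2 c3 d : ℕ)
    (h1 : c1 = 0) (h2 : c2 = 0)
    (h3 : c3 = 0) (r : d = c1 + 2 * c2 + c3) :
    d = 0 := by omega

lemma stepE31 (P Q c1 c2 c3 d : ℕ)
    (h1 : c1 = 0) (h2 : c2 = 0)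
    (h3 : c3 = 0) (r : d = c1 + 2 * c2 + c3) :
    d = 0 := by omega

lemma stepO32 (P Q c1 c2 c3 d : ℕ)
    (h1 : 15 * c1 + 5 * Q + 1 = 6 * P) (h2 : 15 * c2 + 11 = 6 * P + 5 * Q)
    (h3 : 15 * c3 = 6 * P + 5 * Q + 4) (r : d = c1 + 2 * c2 + c3 + 1) :
    15 * d + 4 = 24 * P + 10 * Q := by omega

lemma stepE32 (P Q c1 c2 c3 d : ℕ)
    (h1 : 15 * c1 + 10 * Q = 24 * P + 1) (h2 : 15 * c2 + 4 = 24 * P + 10 * Q)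
    (h3 : 15 * c3 + 4 = 24 * P + 10 * Q) (r : d = c1 + 2 * c2 + c3) :
    15 * d + 11 = 6 * (P * 16) + 5 * (Q * 4) := by omega

lemma stepO33 (P Q c1 c2 c3 d : ℕ)
    (h1 : 15 * c1 + 5 * Q = 3 * P + 2) (h2 : 15 * c2 + 3 = 3 * P)
    (h3 : 15 * c3 + 8 = 3 * P + 5 * Q) (r : d = c1 + 2 * c2 + c3 + 1) :
    15 * d = 12 * P + 3 := by omega

lemma stepE33 (P Q c1 c2 c3 d : ℕ)
    (h1 : 15 * c1 + 10 * Q + 2 = 12 * P) (h2 : 15 * c2 = 12 * P + 3)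
    (h3 : 15 * c3 + 22 = 12 * P + 10 * Q) (r : d = c1 + 2 * c2 + c3 + 1) :
    15 * d + 3 = 3 * (P * 16) := by omega

lemma stepO34 (P Q c1 c2 c3 d : ℕ)
    (h1 : 15 * c1 + 5 * Q + 1 = 6 * P) (h2 : 15 * c2 + 5 * Q + 1 = 6 * P)
    (h3 : 15 * c3 + 11 = 6 * P + 5 * Q) (r : d = c1 + 2 * c2 + c3 + 1) :
    15 * d + 10 * Q = 24 * P + 1 := by omega

lemma stepE34 (P Q c1 c2 c3 d : ℕ)
    (h1 : 15 * c1 + 10 * Q = 24 * P + 1) (h2 : 15 * c2 + 10 * Q = 24 * P + 1)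
    (h3 : 15 * c3 + 4 = 24 * P + 10 * Q) (r : d = c1 + 2 * c2 + c3) :
    15 * d + 5 * (Q * 4) + 1 = 6 * (P * 16) := by omega

lemma stepO41 (P Q c1 c2 c3 d : ℕ)
    (h1 : 15 * c1 + 11 = 6 * P + 5 * Q) (h2 : 15 * c2 + 5 * Q + 1 = 6 * P)
    (h3 : 15 * c3 + 5 * Q + 1 = 6 * P) (r : d = c1 + 2 * c2 + c3 + 1) :
    15 * d + 10 * Q = 24 * P + 1 := by omega

lemma stepE41 (P Q c1 c2 c3 d : ℕ)
    (h1 : 15 * c1 + 4 = 24 * P + 10 * Q) (h2 : 15 * c2 + 10 * Q = 24 * P + 1)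
    (h3 : 15 * c3 + 10 * Q = 24 * P + 1) (r : d = c1 + 2 * c2 + c3) :
    15 * d + 5 * (Q * 4) + 1 = 6 * (P * 16) := by omega

lemma stepO42 (P Q c1 c2 c3 d : ℕ)
    (h1 : c1 = 0) (h2 : c2 = 0)
    (h3 : c3 = 0) (r : d = c1 + 2 * c2 + c3) :
    d = 0 := by omega

lemma stepE42 (P Q c1 c2 c3 d : ℕ)
    (h1 : c1 = 0) (h2 : c2 = 0)
    (h3 : c3 = 0) (r : d = c1 + 2 * c2 + c3) :
    d = 0 := by omega

lemma stepO43 (P Q c1 c2 c3 d : ℕ)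
    (h1 : 15 * c1 + 5 * Q + 1 = 6 * P) (h2 : 15 * c2 + 5 * Q + 1 = 6 * P)
    (h3 : 15 * c3 = 6 * P + 5 * Q + 4) (r : d = c1 + 2 * c2 + c3) :
    15 * d + 10 * Q = 24 * P + 1 := by omega

lemma stepE43 (P Q c1 c2 c3 d : ℕ)
    (h1 : 15 * c1 + 10 * Q = 24 * P + 1) (h2 : 15 * c2 + 10 * Q = 24 * P + 1)
    (h3 : 15 * c3 + 4 = 24 * P + 10 * Q) (r : d = c1 + 2 * c2 + c3) :
    15 * d + 5 * (Q * 4) + 1 = 6 * (P * 16) := by omega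

lemma stepO44 (P Q c1 c2 c3 d : ℕ)
    (h1 : 15 * c1 + 3 = 3 * P) (h2 : 15 * c2 + 5 * Q = 3 * P + 2)
    (h3 : 15 * c3 + 3 = 3 * P) (r : d = c1 + 2 * c2 + c3) :
    15 * d + 10 * Q + 2 = 12 * P := by omega

lemma stepE44 (P Q c1 c2 c3 d : ℕ)
    (h1 : 15 * c1 = 12 * P + 3) (h2 : 15 * c2 + 10 * Q + 2 = 12 * P)
    (h3 : 15 * c3 = 12 * P + 3) (r : d = c1 + 2 * c2 + c3) :
    15 * d + 5 * (Q * 4) = 3 * (P * 16) + 2 := by omega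


theorem counts_odd (k : ℕ) :
    15 * (pairs (peano (2 * k + 1))).count (1, 1) + 3 = 3 * 16 ^ k ∧
    15 * (pairs (peano (2 * k + 1))).count (1, 2) = 6 * 16 ^ k + 5 * 4 ^ k + 4 ∧
    (pairs (peano (2 * k + 1))).count (1, 3) = 0 ∧
    15 * (pairs (peano (2 * k + 1))).count (1, 4) + 5 * 4 ^ k + 1 = 6 * 16 ^ k ∧
    15 * (pairs (peano (2 * k + 1))).count (2, 1) + 11 = 6 * 16 ^ k + 5 * 4 ^ k ∧
    15 * (pairs (peano (2 * k + 1))).count (2, 2) + 8 = 3 * 16 ^ k + 5 * 4 ^ k ∧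
    15 * (pairs (peano (2 * k + 1))).count (2, 3) = 6 * 16 ^ k + 5 * 4 ^ k + 4 ∧
    (pairs (peano (2 * k + 1))).count (2, 4) = 0 ∧
    (pairs (peano (2 * k + 1))).count (3, 1) = 0 ∧
    15 * (pairs (peano (2 * k + 1))).count (3, 2) + 11 = 6 * 16 ^ k + 5 * 4 ^ k ∧
    15 * (pairs (peano (2 * k + 1))).count (3, 3) + 3 = 3 * 16 ^ k ∧
    15 * (pairs (peano (2 * k + 1))).count (3, 4) + 5 * 4 ^ k + 1 = 6 * 16 ^ k ∧
    15 * (pairs (peano (2 * k + 1))).count (4, 1) + 5 * 4 ^ k + 1 = 6 * 16 ^ k ∧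
    (pairs (peano (2 * k + 1))).count (4, 2) = 0 ∧
    15 * (pairs (peano (2 * k + 1))).count (4, 3) + 5 * 4 ^ k + 1 = 6 * 16 ^ k ∧
    15 * (pairs (peano (2 * k + 1))).count (4, 4) + 5 * 4 ^ k = 3 * 16 ^ k + 2 := by
  induction k with
  | zero => norm_num [peano]
  | succ k ih =>
    obtain ⟨h11, h12, h13, h14, h21, h22, h23, h24, h31, h32, h33, h34, h41, h42, h43, h44⟩ := ih
    have key1 : peano (2 * k + 2) = phi1 (peano (2 * k + 1)) ++ [1] ++ peano (2 * k + 1)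
        ++ [2] ++ peano (2 * k + 1) ++ [3] ++ phi2 (peano (2 * k + 1)) := peano_step (2 * k)
    have key2 : peano (2 * (k + 1) + 1) = phi1 (peano (2 * k + 2)) ++ [1] ++ peano (2 * k + 2)
        ++ [2] ++ peano (2 * k + 2) ++ [3] ++ phi2 (peano (2 * k + 2)) := by
      have e : 2 * (k + 1) + 1 = (2 * k + 1) + 2 := by ring
      rw [e, peano_step]
    have me11 := cnt_step (peano (2 * k + 1)) (range_peano _) 1 3 (hd_lst k).1.1
        (hd_lst k).1.2 1 1 (by norm_num [InR]) (by norm_num [InR])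
    rw [← key1] at me11
    simp only [f1, f2] at me11
    norm_num [List.count_cons, List.count_nil, -Prod.mk_one_one] at me11
    have me12 := cnt_step (peano (2 * k + 1)) (range_peano _) 1 3 (hd_lst k).1.1
        (hd_lst k).1.2 1 2 (by norm_num [InR]) (by norm_num [InR])
    rw [← key1] at me12
    simp only [f1, f2] at me12
    norm_num [List.count_cons, List.count_nil, -Prod.mk_one_one] at me12
    have me13 := cnt_step (peano (2 * k + 1)) (range_peano _) 1 3 (hd_lst k).1.1
        (hd_lst k).1.2 1 3 (by norm_num [InR]) (by norm_num [InR])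
    rw [← key1] at me13
    simp only [f1, f2] at me13
    norm_num [List.count_cons, List.count_nil, -Prod.mk_one_one] at me13
    have me14 := cnt_step (peano (2 * k + 1)) (range_peano _) 1 3 (hd_lst k).1.1
        (hd_lst k).1.2 1 4 (by norm_num [InR]) (by norm_num [InR])
    rw [← key1] at me14
    simp only [f1, f2] at me14
    norm_num [List.count_cons, List.count_nil, -Prod.mk_one_one] at me14
    have me21 := cnt_step (peano (2 * k + 1)) (range_peano _) 1 3 (hd_lst k).1.1
        (hd_lst k).1.2 2 1 (by norm_num [InR]) (by norm_num [InR])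
    rw [← key1] at me21
    simp only [f1, f2] at me21
    norm_num [List.count_cons, List.count_nil, -Prod.mk_one_one] at me21
    have me22 := cnt_step (peano (2 * k + 1)) (range_peano _) 1 3 (hd_lst k).1.1
        (hd_lst k).1.2 2 2 (by norm_num [InR]) (by norm_num [InR])
    rw [← key1] at me22
    simp only [f1, f2] at me22
    norm_num [List.count_cons, List.count_nil, -Prod.mk_one_one] at me22
    have me23 := cnt_step (peano (2 * k + 1)) (range_peano _) 1 3 (hd_lst k).1.1
        (hd_lst k).1.2 2 3 (by norm_num [InR]) (by norm_num [InR])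
    rw [← key1] at me23
    simp only [f1, f2] at me23
    norm_num [List.count_cons, List.count_nil, -Prod.mk_one_one] at me23
    have me24 := cnt_step (peano (2 * k + 1)) (range_peano _) 1 3 (hd_lst k).1.1
        (hd_lst k).1.2 2 4 (by norm_num [InR]) (by norm_num [InR])
    rw [← key1] at me24
    simp only [f1, f2] at me24
    norm_num [List.count_cons, List.count_nil, -Prod.mk_one_one] at me24
    have me31 := cnt_step (peano (2 * k + 1)) (range_peano _) 1 3 (hd_lst k).1.1
        (hd_lst k).1.2 3 1 (by norm_num [InR]) (by norm_num [InR])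
    rw [← key1] at me31
    simp only [f1, f2] at me31
    norm_num [List.count_cons, List.count_nil, -Prod.mk_one_one] at me31
    have me32 := cnt_step (peano (2 * k + 1)) (range_peano _) 1 3 (hd_lst k).1.1
        (hd_lst k).1.2 3 2 (by norm_num [InR]) (by norm_num [InR])
    rw [← key1] at me32
    simp only [f1, f2] at me32
    norm_num [List.count_cons, List.count_nil, -Prod.mk_one_one] at me32
    have me33 := cnt_step (peano (2 * k + 1)) (range_peano _) 1 3 (hd_lst k).1.1
        (hd_lst k).1.2 3 3 (by norm_num [InR]) (by norm_num [InR])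
    rw [← key1] at me33
    simp only [f1, f2] at me33
    norm_num [List.count_cons, List.count_nil, -Prod.mk_one_one] at me33
    have me34 := cnt_step (peano (2 * k + 1)) (range_peano _) 1 3 (hd_lst k).1.1
        (hd_lst k).1.2 3 4 (by norm_num [InR]) (by norm_num [InR])
    rw [← key1] at me34
    simp only [f1, f2] at me34
    norm_num [List.count_cons, List.count_nil, -Prod.mk_one_one] at me34
    have me41 := cnt_step (peano (2 * k + 1)) (range_peano _) 1 3 (hd_lst k).1.1
        (hd_lst k).1.2 4 1 (by norm_num [InR]) (by norm_num [InR])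
    rw [← key1] at me41
    simp only [f1, f2] at me41
    norm_num [List.count_cons, List.count_nil, -Prod.mk_one_one] at me41
    have me42 := cnt_step (peano (2 * k + 1)) (range_peano _) 1 3 (hd_lst k).1.1
        (hd_lst k).1.2 4 2 (by norm_num [InR]) (by norm_num [InR])
    rw [← key1] at me42
    simp only [f1, f2] at me42
    norm_num [List.count_cons, List.count_nil, -Prod.mk_one_one] at me42
    have me43 := cnt_step (peano (2 * k + 1)) (range_peano _) 1 3 (hd_lst k).1.1
        (hd_lst k).1.2 4 3 (by norm_num [InR]) (by norm_num [InR])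
    rw [← key1] at me43
    simp only [f1, f2] at me43
    norm_num [List.count_cons, List.count_nil, -Prod.mk_one_one] at me43
    have me44 := cnt_step (peano (2 * k + 1)) (range_peano _) 1 3 (hd_lst k).1.1
        (hd_lst k).1.2 4 4 (by norm_num [InR]) (by norm_num [InR])
    rw [← key1] at me44
    simp only [f1, f2] at me44
    norm_num [List.count_cons, List.count_nil, -Prod.mk_one_one] at me44
    have mo11 := cnt_step (peano (2 * k + 2)) (range_peano _) 2 2 (hd_lst k).2.1
        (hd_lst k).2.2 1 1 (by norm_num [InR]) (by norm_num [InR])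
    rw [← key2] at mo11
    simp only [f1, f2] at mo11
    norm_num [List.count_cons, List.count_nil, -Prod.mk_one_one] at mo11
    have mo12 := cnt_step (peano (2 * k + 2)) (range_peano _) 2 2 (hd_lst k).2.1
        (hd_lst k).2.2 1 2 (by norm_num [InR]) (by norm_num [InR])
    rw [← key2] at mo12
    simp only [f1, f2] at mo12
    norm_num [List.count_cons, List.count_nil, -Prod.mk_one_one] at mo12
    have mo13 := cnt_step (peano (2 * k + 2)) (range_peano _) 2 2 (hd_lst k).2.1
        (hd_lst k).2.2 1 3 (by norm_num [InR]) (by norm_num [InR])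
    rw [← key2] at mo13
    simp only [f1, f2] at mo13
    norm_num [List.count_cons, List.count_nil, -Prod.mk_one_one] at mo13
    have mo14 := cnt_step (peano (2 * k + 2)) (range_peano _) 2 2 (hd_lst k).2.1
        (hd_lst k).2.2 1 4 (by norm_num [InR]) (by norm_num [InR])
    rw [← key2] at mo14
    simp only [f1, f2] at mo14
    norm_num [List.count_cons, List.count_nil, -Prod.mk_one_one] at mo14
    have mo21 := cnt_step (peano (2 * k + 2)) (range_peano _) 2 2 (hd_lst k).2.1
        (hd_lst k).2.2 2 1 (by norm_num [InR]) (by norm_num [InR])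
    rw [← key2] at mo21
    simp only [f1, f2] at mo21
    norm_num [List.count_cons, List.count_nil, -Prod.mk_one_one] at mo21
    have mo22 := cnt_step (peano (2 * k + 2)) (range_peano _) 2 2 (hd_lst k).2.1
        (hd_lst k).2.2 2 2 (by norm_num [InR]) (by norm_num [InR])
    rw [← key2] at mo22
    simp only [f1, f2] at mo22
    norm_num [List.count_cons, List.count_nil, -Prod.mk_one_one] at mo22
    have mo23 := cnt_step (peano (2 * k + 2)) (range_peano _) 2 2 (hd_lst k).2.1
        (hd_lst k).2.2 2 3 (by norm_num [InR]) (by norm_num [InR])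
    rw [← key2] at mo23
    simp only [f1, f2] at mo23
    norm_num [List.count_cons, List.count_nil, -Prod.mk_one_one] at mo23
    have mo24 := cnt_step (peano (2 * k + 2)) (range_peano _) 2 2 (hd_lst k).2.1
        (hd_lst k).2.2 2 4 (by norm_num [InR]) (by norm_num [InR])
    rw [← key2] at mo24
    simp only [f1, f2] at mo24
    norm_num [List.count_cons, List.count_nil, -Prod.mk_one_one] at mo24
    have mo31 := cnt_step (peano (2 * k + 2)) (range_peano _) 2 2 (hd_lst k).2.1
        (hd_lst k).2.2 3 1 (by norm_num [InR]) (by norm_num [InR])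
    rw [← key2] at mo31
    simp only [f1, f2] at mo31
    norm_num [List.count_cons, List.count_nil, -Prod.mk_one_one] at mo31
    have mo32 := cnt_step (peano (2 * k + 2)) (range_peano _) 2 2 (hd_lst k).2.1
        (hd_lst k).2.2 3 2 (by norm_num [InR]) (by norm_num [InR])
    rw [← key2] at mo32
    simp only [f1, f2] at mo32
    norm_num [List.count_cons, List.count_nil, -Prod.mk_one_one] at mo32
    have mo33 := cnt_step (peano (2 * k + 2)) (range_peano _) 2 2 (hd_lst k).2.1
        (hd_lst k).2.2 3 3 (by norm_num [InR]) (by norm_num [InR])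
    rw [← key2] at mo33
    simp only [f1, f2] at mo33
    norm_num [List.count_cons, List.count_nil, -Prod.mk_one_one] at mo33
    have mo34 := cnt_step (peano (2 * k + 2)) (range_peano _) 2 2 (hd_lst k).2.1
        (hd_lst k).2.2 3 4 (by norm_num [InR]) (by norm_num [InR])
    rw [← key2] at mo34
    simp only [f1, f2] at mo34
    norm_num [List.count_cons, List.count_nil, -Prod.mk_one_one] at mo34
    have mo41 := cnt_step (peano (2 * k + 2)) (range_peano _) 2 2 (hd_lst k).2.1
        (hd_lst k).2.2 4 1 (by norm_num [InR]) (by norm_num [InR])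
    rw [← key2] at mo41
    simp only [f1, f2] at mo41
    norm_num [List.count_cons, List.count_nil, -Prod.mk_one_one] at mo41
    have mo42 := cnt_step (peano (2 * k + 2)) (range_peano _) 2 2 (hd_lst k).2.1
        (hd_lst k).2.2 4 2 (by norm_num [InR]) (by norm_num [InR])
    rw [← key2] at mo42
    simp only [f1, f2] at mo42
    norm_num [List.count_cons, List.count_nil, -Prod.mk_one_one] at mo42
    have mo43 := cnt_step (peano (2 * k + 2)) (range_peano _) 2 2 (hd_lst k).2.1
        (hd_lst k).2.2 4 3 (by norm_num [InR]) (by norm_num [InR])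
    rw [← key2] at mo43
    simp only [f1, f2] at mo43
    norm_num [List.count_cons, List.count_nil, -Prod.mk_one_one] at mo43
    have mo44 := cnt_step (peano (2 * k + 2)) (range_peano _) 2 2 (hd_lst k).2.1
        (hd_lst k).2.2 4 4 (by norm_num [InR]) (by norm_num [InR])
    rw [← key2] at mo44
    simp only [f1, f2] at mo44
    norm_num [List.count_cons, List.count_nil, -Prod.mk_one_one] at mo44
    have E11 := stepO11 (16 ^ k) (4 ^ k) _ _ _ _ h22 h11 h44 me11
    have E12 := stepO12 (16 ^ k) (4 ^ k) _ _ _ _ h32 h12 h14 me12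
    have E13 := stepO13 (16 ^ k) (4 ^ k) _ _ _ _ h42 h13 h24 me13
    have E14 := stepO14 (16 ^ k) (4 ^ k) _ _ _ _ h12 h14 h34 me14
    have E21 := stepO21 (16 ^ k) (4 ^ k) _ _ _ _ h23 h21 h41 me21
    have E22 := stepO22 (16 ^ k) (4 ^ k) _ _ _ _ h33 h22 h11 me22
    have E23 := stepO23 (16 ^ k) (4 ^ k) _ _ _ _ h43 h23 h21 me23
    have E24 := stepO24 (16 ^ k) (4 ^ k) _ _ _ _ h13 h24 h31 me24
    have E31 := stepO31 (16 ^ k) (4 ^ k) _ _ _ _ h24 h31 h42 me31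
    have E32 := stepO32 (16 ^ k) (4 ^ k) _ _ _ _ h34 h32 h12 me32
    have E33 := stepO33 (16 ^ k) (4 ^ k) _ _ _ _ h44 h33 h22 me33
    have E34 := stepO34 (16 ^ k) (4 ^ k) _ _ _ _ h14 h34 h32 me34
    have E41 := stepO41 (16 ^ k) (4 ^ k) _ _ _ _ h21 h41 h43 me41
    have E42 := stepO42 (16 ^ k) (4 ^ k) _ _ _ _ h31 h42 h13 me42
    have E43 := stepO43 (16 ^ k) (4 ^ k) _ _ _ _ h41 h43 h23 me43
    have E44 := stepO44 (16 ^ k) (4 ^ k) _ _ _ _ h11 h44 h33 me44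
    have F11 := stepE11 (16 ^ k) (4 ^ k) _ _ _ _ E22 E11 E44 mo11
    have F12 := stepE12 (16 ^ k) (4 ^ k) _ _ _ _ E32 E12 E14 mo12
    have F13 := stepE13 (16 ^ k) (4 ^ k) _ _ _ _ E42 E13 E24 mo13
    have F14 := stepE14 (16 ^ k) (4 ^ k) _ _ _ _ E12 E14 E34 mo14
    have F21 := stepE21 (16 ^ k) (4 ^ k) _ _ _ _ E23 E21 E41 mo21
    have F22 := stepE22 (16 ^ k) (4 ^ k) _ _ _ _ E33 E22 E11 mo22
    have F23 := stepE23 (16 ^ k) (4 ^ k) _ _ _ _ E43 E23 E21 mo23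
    have F24 := stepE24 (16 ^ k) (4 ^ k) _ _ _ _ E13 E24 E31 mo24
    have F31 := stepE31 (16 ^ k) (4 ^ k) _ _ _ _ E24 E31 E42 mo31
    have F32 := stepE32 (16 ^ k) (4 ^ k) _ _ _ _ E34 E32 E12 mo32
    have F33 := stepE33 (16 ^ k) (4 ^ k) _ _ _ _ E44 E33 E22 mo33
    have F34 := stepE34 (16 ^ k) (4 ^ k) _ _ _ _ E14 E34 E32 mo34
    have F41 := stepE41 (16 ^ k) (4 ^ k) _ _ _ _ E21 E41 E43 mo41
    have F42 := stepE42 (16 ^ k) (4 ^ k) _ _ _ _ E31 E42 E13 mo42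
    have F43 := stepE43 (16 ^ k) (4 ^ k) _ _ _ _ E41 E43 E23 mo43
    have F44 := stepE44 (16 ^ k) (4 ^ k) _ _ _ _ E11 E44 E33 mo44
    rw [pow_succ, pow_succ]
    exact ⟨F11, F12, F13, F14, F21, F22, F23, F24, F31, F32, F33, F34, F41, F42, F43, F44⟩

lemma desc_count (L : List (ℕ × ℕ)) (hr : ∀ p ∈ L, InR p.1 ∧ InR p.2) :
    (L.filter (fun p => p.2 < p.1)).length =
      L.count (2, 1) + L.count (3, 1) + L.count (4, 1) + L.count (3, 2)
        + L.count (4, 2) + L.count (4, 3) := by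
  induction L with
  | nil => simp
  | cons p L ih =>
    have hp := hr p List.mem_cons_self
    have hL : ∀ q ∈ L, InR q.1 ∧ InR q.2 := fun q hq => hr q (List.mem_cons_of_mem p hq)
    obtain ⟨x, y⟩ := p
    rcases hp.1 with rfl | rfl | rfl | rfl <;> rcases hp.2 with rfl | rfl | rfl | rfl <;>
      simp [List.filter_cons, List.count_cons, ih hL, -Prod.mk_one_one] <;> omega

lemma final (k : ℕ) : 5 * descents (peano (2 * k + 1)) = 8 * (16 ^ k - 1) := by
  have hd : descents (peano (2 * k + 1)) =
      (pairs (peano (2 * k + 1))).count (2, 1) + (pairs (peano (2 * k + 1))).count (3, 1)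
        + (pairs (peano (2 * k + 1))).count (4, 1) + (pairs (peano (2 * k + 1))).count (3, 2)
        + (pairs (peano (2 * k + 1))).count (4, 2) + (pairs (peano (2 * k + 1))).count (4, 3) :=
    desc_count (pairs (peano (2 * k + 1))) (fun p hp => pairs_mem (range_peano _) hp)
  obtain ⟨h11, h12, h13, h14, h21, h22, h23, h24, h31, h32, h33, h34, h41, h42, h43, h44⟩ :=
    counts_odd k
  have hp : (1 : ℕ) ≤ 16 ^ k := Nat.one_le_pow _ _ (by norm_num)
  omega

end PA

theorem peano_descents_odd (k : ℕ) :
    5 * descents (peano (2 * k + 1)) = 8 * (16 ^ k - 1) := PA.final k
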